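/- arXiv:2104.14038 — 5 statements merged into one kernel-verified Lean document; each statement's English description precedes it below -/
import Mathlib

section
/- Let μ₀ > 0, λ ≠ 0, a₁, b₁ be real numbers and τ ∈ ℂ. For complex numbers F and W define Φ₁⁺ = F, Φ₁⁻ = conj(F), Φ₂⁺ = i·conj(τ)·W/(λμ₀), Φ₂⁻ = −i·τ·conj(W)/(λμ₀). Then the pair of conditions Im F = b₁ and Re F = (1/λ)·Re(conj(τ)·W/μ₀) + a₁ holds if and only if the pair of conditions Φ₁⁺ = Φ₁⁻ + 2i·b₁ and Φ₂⁺ = 2i·Φ₁⁻ + Φ₂⁻ − 2i·(a₁ − i·b₁) holds. -/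
open Complex ComplexConjugate

theorem stmt0 (μ₀ lam a₁ b₁ : ℝ) (hμ : 0 < μ₀) (hlam : lam ≠ 0)
    (τ F W : ℂ) :
    (F.im = b₁ ∧ F.re = (1 / lam) * ((conj τ * W / (μ₀ : ℂ)).re) + a₁) ↔
    (F = conj F + 2 * I * (b₁ : ℂ) ∧
      I * conj τ * W / ((lam : ℂ) * (μ₀ : ℂ)) =
        2 * I * conj F + (-(I) * τ * conj W / ((lam : ℂ) * (μ₀ : ℂ)))
          - 2 * I * ((a₁ : ℂ) - I * (b₁ : ℂ))) := by
  have hμ' : (μ₀:ℝ) ≠ 0 := hμ.ne'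
  have h2lam : (2 * lam : ℝ) ≠ 0 := by positivity
  simp only [Complex.ext_iff, Complex.div_re, Complex.div_im, Complex.mul_re, Complex.mul_im,
    Complex.add_re, Complex.add_im, Complex.sub_re, Complex.sub_im, Complex.neg_re, Complex.neg_im,
    Complex.I_re, Complex.I_im, Complex.conj_re, Complex.conj_im, Complex.ofReal_re,
    Complex.ofReal_im, Complex.normSq_mk, Complex.normSq_ofReal, Complex.re_ofNat, Complex.im_ofNat,
    Complex.normSq_apply]
  field_simp
  constructor
  · rintro ⟨h1, h2⟩
    refine ⟨by constructor <;> linarith, by linear_combination (-2*lam*lam*μ₀*μ₀)*h1, by linear_combination (-2*lam)*h2⟩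
  · rintro ⟨h1, h2, h3⟩
    refine ⟨by linarith, ?_⟩
    have h4 : (2*lam) * (F.re * (lam * (μ₀ * μ₀))) =
        (2*lam) * ((τ.re * W.re + τ.im * W.im) * μ₀ + a₁ * (lam * (μ₀ * μ₀))) := by
      linear_combination -h3
    have h5 := mul_left_cancel₀ h2lam h4
    linear_combination h5
end

section
/- Let μ₀ > 0, λ ≠ 0, b₀ be real numbers and τ ∈ ℂ with τ ≠ 0. For complex numbers F and W define Φ₁⁺ = F, Φ₁⁻ = conj(F), Φ₂⁺ = i·conj(τ)·W/(λμ₀), Φ₂⁻ = −i·τ·conj(W)/(λμ₀). Then the pair of conditions Im W = 0 and Im F = b₀ − Im(conj(τ)·W/μ₀) holds if and only if the pair of conditions Φ₁⁺ = Φ₁⁻ + iλ(1 − conj(τ)/τ)·Φ₂⁻ + 2i·b₀ and Φ₂⁺ = −(conj(τ)/τ)·Φ₂⁻ holds. -/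
open Complex ComplexConjugate

theorem stmt1 (μ₀ lam b₀ : ℝ) (hμ : 0 < μ₀) (hlam : lam ≠ 0)
    (τ F W : ℂ) (hτ : τ ≠ 0) :
    (W.im = 0 ∧ F.im = b₀ - (conj τ * W / (μ₀ : ℂ)).im) ↔
    (F = conj F + I * (lam : ℂ) * (1 - conj τ / τ) * (-(I) * τ * conj W / ((lam : ℂ) * (μ₀ : ℂ)))
        + 2 * I * (b₀ : ℂ) ∧
      I * conj τ * W / ((lam : ℂ) * (μ₀ : ℂ)) =
        -(conj τ / τ) * (-(I) * τ * conj W / ((lam : ℂ) * (μ₀ : ℂ)))) := by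
  have hμ' : (μ₀ : ℂ) ≠ 0 := by exact_mod_cast hμ.ne'
  have hlam' : (lam : ℂ) ≠ 0 := by exact_mod_cast hlam
  have hτ' : conj τ ≠ 0 := by simpa using hτ
  set s : ℝ := (conj τ * W / (μ₀:ℂ)).im with hs
  have e2 : conj τ * W / (μ₀:ℂ) - τ * conj W / (μ₀:ℂ) = (2 * s : ℝ) * I := by
    have h := Complex.sub_conj (conj τ * W / (μ₀:ℂ))
    rw [map_div₀, map_mul, Complex.conj_conj, Complex.conj_ofReal] at h
    exact h
  have key : I * (lam : ℂ) * (1 - conj τ / τ) * (-(I) * τ * conj W / ((lam : ℂ) * (μ₀ : ℂ)))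
      = (τ * conj W - conj τ * conj W) / (μ₀:ℂ) := by
    field_simp
    linear_combination (conj τ - τ) * conj W * Complex.I_sq
  have key2 : -(conj τ / τ) * (-(I) * τ * conj W / ((lam : ℂ) * (μ₀ : ℂ)))
      = I * conj τ * conj W / ((lam : ℂ) * (μ₀ : ℂ)) := by
    field_simp
  constructor
  · rintro ⟨h1, h2⟩
    have hW : conj W = W := Complex.conj_eq_iff_im.mpr h1
    have e1 : F - conj F = (2 * (b₀ - s) : ℝ) * I := by
      rw [← h2]; exact Complex.sub_conj F
    rw [key, key2, hW]
    rw [hW] at e2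
    push_cast at e1 e2
    constructor
    · linear_combination e1 + e2
    · ring
  · rintro ⟨g1, g2⟩
    rw [key2] at g2
    have hW : conj W = W := by
      field_simp at g2
      exact g2.symm
    have h1 : W.im = 0 := Complex.conj_eq_iff_im.mp hW
    refine ⟨h1, ?_⟩
    rw [key, hW] at g1
    rw [hW] at e2
    have e1 : F - conj F = (2 * (b₀ - s) : ℝ) * I := by
      push_cast
      push_cast at e2
      linear_combination g1 - e2
    have him := congrArg Complex.im e1
    simp only [Complex.sub_im, Complex.conj_im, Complex.ofReal_mul, Complex.ofReal_sub,
      Complex.ofReal_ofNat, Complex.mul_im, Complex.ofReal_re, Complex.ofReal_im,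
      Complex.I_re, Complex.I_im, mul_one, mul_zero, zero_mul, sub_zero, add_zero,
      Complex.sub_re, Complex.mul_re, Complex.re_ofNat, Complex.im_ofNat] at him
    linarith
end

section
/- Let m > 1 and ξ₀ < 0 be real and let N₀, N₁, N₂, b₀, b₁ be real. For real η < ξ₀ define u(η) = √(η(1−η)(η−m)) (the positive real root) and Φ₁(η) = N₀ + i(N₁+iN₂)·(u(η)+u(ξ₀))/(η−ξ₀) + i(N₁−iN₂)·(u(η)−u(ξ₀))/(η−ξ₀) + (i·u(η)/(π(η−ξ₀)))·[ b₁·∫_0^1 (ξ−ξ₀) dξ/(√(ξ(1−ξ)(m−ξ))·(ξ−η)) − b₀·∫_m^∞ (ξ−ξ₀) dξ/(√(ξ(ξ−1)(ξ−m))·(ξ−η)) ], where u(ξ₀) = √(ξ₀(1−ξ₀)(ξ₀−m)) > 0. Then Φ₁(η)/√(−η) converges to −2iN₁ as η → −∞. -/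
open Complex MeasureTheory intervalIntegral Filter

/-- The branch `u(η) = √(η(1−η)(η−m))` (positive real root) on the negative real axis. -/
noncomputable def uNeg (m η : ℝ) : ℝ := Real.sqrt (η * (1 - η) * (η - m))

/-- The general solution `Φ₁` of the first scalar Riemann–Hilbert problem, evaluated at a
real point `η < ξ₀` of the negative real axis, with `u(η) = √(η(1−η)(η−m)) > 0`. -/
noncomputable def Phi1R (m ξ₀ N₀ N₁ N₂ b₀ b₁ : ℝ) (η : ℝ) : ℂ :=
  (N₀ : ℂ)
    + I * ((N₁ : ℂ) + I * (N₂ : ℂ)) * ((uNeg m η : ℂ) + (uNeg m ξ₀ : ℂ)) / ((η : ℂ) - (ξ₀ : ℂ))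
    + I * ((N₁ : ℂ) - I * (N₂ : ℂ)) * ((uNeg m η : ℂ) - (uNeg m ξ₀ : ℂ)) / ((η : ℂ) - (ξ₀ : ℂ))
    + (I * (uNeg m η : ℂ) / ((Real.pi : ℂ) * ((η : ℂ) - (ξ₀ : ℂ)))) *
        ((b₁ : ℂ) * (∫ x in (0:ℝ)..1,
            ((x : ℂ) - (ξ₀ : ℂ)) / ((Real.sqrt (x * (1 - x) * (m - x)) : ℂ) * ((x : ℂ) - (η : ℂ))))
          - (b₀ : ℂ) * (∫ x in Set.Ioi m,
            ((x : ℂ) - (ξ₀ : ℂ)) / ((Real.sqrt (x * (x - 1) * (x - m)) : ℂ) * ((x : ℂ) - (η : ℂ)))))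

section Aux

lemma sqrt_tendsto_atTop' : Tendsto Real.sqrt atTop atTop := by
  rw [show Real.sqrt = fun x : ℝ => x ^ (1/2 : ℝ) from funext Real.sqrt_eq_rpow]
  exact tendsto_rpow_atTop (by norm_num)

lemma denom_atTop' (ξ₀ : ℝ) :
    Tendsto (fun η : ℝ => (ξ₀ - η) * Real.sqrt (-η)) atBot atTop := by
  have hA : Tendsto (fun η : ℝ => ξ₀ - η) atBot atTop := by
    simpa [sub_eq_add_neg] using tendsto_atTop_add_const_left atBot ξ₀ tendsto_neg_atBot_atTop
  have hB : Tendsto (fun η : ℝ => Real.sqrt (-η)) atBot atTop :=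
    sqrt_tendsto_atTop'.comp tendsto_neg_atBot_atTop
  exact hA.atTop_mul_atTop₀ hB

lemma inv_denom_zero' (ξ₀ : ℝ) :
    Tendsto (fun η : ℝ => ((η - ξ₀) * Real.sqrt (-η))⁻¹) atBot (nhds 0) := by
  have : (fun η : ℝ => ((η - ξ₀) * Real.sqrt (-η))⁻¹)
      = fun η : ℝ => -(((ξ₀ - η) * Real.sqrt (-η))⁻¹) := by
    funext η
    rw [show η - ξ₀ = -(ξ₀ - η) from by ring, neg_mul, inv_neg]
  rw [this]
  simpa using ((denom_atTop' ξ₀).inv_tendsto_atTop).neg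

lemma hr2' (m ξ₀ : ℝ) :
    Tendsto (fun η : ℝ => uNeg m ξ₀ / ((η - ξ₀) * Real.sqrt (-η))) atBot (nhds 0) := by
  simp only [div_eq_mul_inv]
  simpa using (inv_denom_zero' ξ₀).const_mul (uNeg m ξ₀)

lemma he0' : Tendsto (fun η : ℝ => (Real.sqrt (-η))⁻¹) atBot (nhds 0) :=
  (sqrt_tendsto_atTop'.comp tendsto_neg_atBot_atTop).inv_tendsto_atTop

lemma hq' (ξ₀ c : ℝ) : Tendsto (fun η : ℝ => (c - η) / (ξ₀ - η)) atBot (nhds 1) := by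
  have hden : Tendsto (fun η : ℝ => ξ₀ - η) atBot atTop := by
    simpa [sub_eq_add_neg] using tendsto_atTop_add_const_left atBot ξ₀ tendsto_neg_atBot_atTop
  have h2 : Tendsto (fun η : ℝ => 1 + (c - ξ₀) * (ξ₀ - η)⁻¹) atBot (nhds 1) := by
    simpa using ((hden.inv_tendsto_atTop).const_mul (c - ξ₀)).const_add 1
  apply h2.congr'
  filter_upwards [eventually_lt_atBot ξ₀] with η hη
  have h0 : ξ₀ - η ≠ 0 := ne_of_gt (by linarith)
  rw [eq_div_iff h0, add_mul, one_mul, mul_assoc, inv_mul_cancel₀ h0, mul_one]; ring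

lemma hr1' (m ξ₀ : ℝ) (hm : 1 < m) (hξ₀ : ξ₀ < 0) :
    Tendsto (fun η : ℝ => uNeg m η / ((η - ξ₀) * Real.sqrt (-η))) atBot (nhds (-1)) := by
  have hp : Tendsto (fun η : ℝ => ((1 - η) / (ξ₀ - η)) * ((m - η) / (ξ₀ - η)))
      atBot (nhds 1) := by simpa using (hq' ξ₀ 1).mul (hq' ξ₀ m)
  have hmain : Tendsto
      (fun η : ℝ => -Real.sqrt (((1 - η) / (ξ₀ - η)) * ((m - η) / (ξ₀ - η))))
      atBot (nhds (-1)) := by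
    have := (Real.continuous_sqrt.tendsto 1).comp hp
    simpa [Function.comp] using this.neg
  refine Tendsto.congr' ?_ hmain
  filter_upwards [eventually_lt_atBot (min ξ₀ (-1))] with η hη
  have hηξ : η < ξ₀ := lt_of_lt_of_le hη (min_le_left _ _)
  have hη0 : η < 0 := by have := lt_of_lt_of_le hη (min_le_right ξ₀ (-1)); linarith
  have hd : (0:ℝ) < ξ₀ - η := by linarith
  have hnη : (0:ℝ) < -η := by linarith
  have e1 : ((1 - η) / (ξ₀ - η)) * ((m - η) / (ξ₀ - η)) = ((1 - η) * (m - η)) / (ξ₀ - η)^2 := by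
    rw [div_mul_div_comm, sq]
  rw [e1, Real.sqrt_div (by nlinarith : (0:ℝ) ≤ (1 - η) * (m - η)), Real.sqrt_sq hd.le]
  rw [show uNeg m η = Real.sqrt (-η) * Real.sqrt ((1 - η) * (m - η)) from by
    rw [uNeg, show η * (1 - η) * (η - m) = (-η) * ((1 - η) * (m - η)) from by ring,
      Real.sqrt_mul hnη.le]]
  have hsnη : Real.sqrt (-η) ≠ 0 := ne_of_gt (Real.sqrt_pos.2 hnη)
  rw [mul_comm (Real.sqrt (-η)), mul_div_mul_right _ _ hsnη,
    show (η:ℝ) - ξ₀ = -(ξ₀ - η) from by ring, div_neg]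

lemma lim_pt' (c s x : ℝ) :
    Tendsto (fun η : ℝ => (x - c) / (s * (x - η))) atBot (nhds 0) := by
  have h : Tendsto (fun η : ℝ => x - η) atBot atTop := by
    simpa [sub_eq_add_neg] using tendsto_atTop_add_const_left atBot x tendsto_neg_atBot_atTop
  have h3 := (h.inv_tendsto_atTop).const_mul ((x - c) / s)
  simp only [mul_zero, Pi.inv_apply] at h3
  apply h3.congr
  intro η
  rw [div_eq_mul_inv, div_eq_mul_inv, mul_inv, ← mul_assoc]

lemma sqrt2bound' {x : ℝ} (hx0 : 0 < x) (hx1 : x < 1) :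
    (Real.sqrt x * Real.sqrt (1 - x))⁻¹
      ≤ Real.sqrt 2 * ((Real.sqrt x)⁻¹ + (Real.sqrt (1 - x))⁻¹) := by
  have hsx : (0:ℝ) < Real.sqrt x := Real.sqrt_pos.2 hx0
  have hs1x : (0:ℝ) < Real.sqrt (1 - x) := Real.sqrt_pos.2 (by linarith)
  have hs2 : (0:ℝ) < Real.sqrt 2 := Real.sqrt_pos.2 (by norm_num)
  rcases le_total x (1/2) with h | h
  · have h2 : (Real.sqrt (1 - x))⁻¹ ≤ Real.sqrt 2 := by
      rw [inv_le_comm₀ hs1x hs2, ← Real.sqrt_inv]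
      exact Real.sqrt_le_sqrt (by linarith)
    calc (Real.sqrt x * Real.sqrt (1 - x))⁻¹
        = (Real.sqrt (1 - x))⁻¹ * (Real.sqrt x)⁻¹ := by rw [mul_inv]; ring
      _ ≤ Real.sqrt 2 * (Real.sqrt x)⁻¹ :=
          mul_le_mul_of_nonneg_right h2 (by positivity)
      _ ≤ Real.sqrt 2 * ((Real.sqrt x)⁻¹ + (Real.sqrt (1 - x))⁻¹) := by
          apply mul_le_mul_of_nonneg_left _ hs2.le
          simp [inv_nonneg.2 hs1x.le]
  · have h2 : (Real.sqrt x)⁻¹ ≤ Real.sqrt 2 := by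
      rw [inv_le_comm₀ hsx hs2, ← Real.sqrt_inv]
      exact Real.sqrt_le_sqrt (by linarith)
    calc (Real.sqrt x * Real.sqrt (1 - x))⁻¹
        = (Real.sqrt x)⁻¹ * (Real.sqrt (1 - x))⁻¹ := by rw [mul_inv]
      _ ≤ Real.sqrt 2 * (Real.sqrt (1 - x))⁻¹ :=
          mul_le_mul_of_nonneg_right h2 (by positivity)
      _ ≤ Real.sqrt 2 * ((Real.sqrt x)⁻¹ + (Real.sqrt (1 - x))⁻¹) := by
          apply mul_le_mul_of_nonneg_left _ hs2.le
          simp [inv_nonneg.2 hsx.le]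

lemma L2' (m ξ₀ : ℝ) (hm : 1 < m) (hξ₀ : ξ₀ < 0) :
    Tendsto (fun η : ℝ => ∫ x in (0:ℝ)..1,
      (x - ξ₀) / (Real.sqrt (x * (1 - x) * (m - x)) * (x - η))) atBot (nhds 0) := by
  have hC0 : (0:ℝ) ≤ (1 - ξ₀) * Real.sqrt 2 / Real.sqrt (m - 1) :=
    div_nonneg (mul_nonneg (by linarith) (Real.sqrt_nonneg _)) (Real.sqrt_nonneg _)
  simp only [intervalIntegral.integral_of_le (zero_le_one (α := ℝ))]
  have := MeasureTheory.tendsto_integral_filter_of_dominated_convergence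
    (μ := volume.restrict (Set.Ioc (0:ℝ) 1)) (l := atBot)
    (F := fun η x => (x - ξ₀) / (Real.sqrt (x * (1 - x) * (m - x)) * (x - η)))
    (f := fun _ => (0:ℝ))
    (fun x => (1 - ξ₀) * Real.sqrt 2 / Real.sqrt (m - 1)
      * (x ^ (-(1/2) : ℝ) + (1 - x) ^ (-(1/2) : ℝ)))
    ?_ ?_ ?_ ?_
  · simpa using this
  · refine Eventually.of_forall fun η => (Measurable.aestronglyMeasurable ?_)
    fun_prop
  · filter_upwards [eventually_le_atBot (-1 : ℝ)] with η hη
    rw [ae_restrict_iff' measurableSet_Ioc]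
    refine ae_of_all _ fun x hx => ?_
    obtain ⟨hx0, hx1⟩ := hx
    by_cases hx1' : x = 1
    · subst hx1'
      have h0 : (1:ℝ) * (1 - 1) * (m - 1) = 0 := by ring
      rw [h0, Real.sqrt_zero, zero_mul, div_zero, norm_zero]
      have h1 : ((1:ℝ) - 1) ^ (-(1/2) : ℝ) = 0 := by
        rw [sub_self, Real.zero_rpow (by norm_num)]
      rw [h1, Real.one_rpow]
      simpa using hC0
    · have hx1'' : x < 1 := lt_of_le_of_ne hx1 hx1'
      have hmx : (0:ℝ) < m - x := by linarith
      have hxη : (1:ℝ) ≤ x - η := by linarith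
      have hsx : Real.sqrt (x * (1 - x) * (m - x))
          = Real.sqrt x * Real.sqrt (1 - x) * Real.sqrt (m - x) := by
        rw [Real.sqrt_mul (mul_nonneg hx0.le (by linarith) : (0:ℝ) ≤ x * (1 - x)),
          Real.sqrt_mul hx0.le]
      rw [Real.norm_eq_abs, _root_.abs_of_nonneg (div_nonneg (by linarith)
        (mul_nonneg (Real.sqrt_nonneg _) (by linarith)))]
      have hrx : x ^ (-(1/2) : ℝ) = (Real.sqrt x)⁻¹ := by
        rw [Real.rpow_neg hx0.le, ← Real.sqrt_eq_rpow]
      have hr1x : (1 - x) ^ (-(1/2) : ℝ) = (Real.sqrt (1 - x))⁻¹ := by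
        rw [Real.rpow_neg (by linarith), ← Real.sqrt_eq_rpow]
      have hd1 : (0:ℝ) < Real.sqrt (m - 1) * (Real.sqrt x * Real.sqrt (1 - x)) := by
        have := Real.sqrt_pos.2 hx0
        have := Real.sqrt_pos.2 (show (0:ℝ) < 1 - x by linarith)
        have := Real.sqrt_pos.2 (show (0:ℝ) < m - 1 by linarith)
        positivity
      calc (x - ξ₀) / (Real.sqrt (x * (1 - x) * (m - x)) * (x - η))
          ≤ (1 - ξ₀) / (Real.sqrt (m - 1) * (Real.sqrt x * Real.sqrt (1 - x))) := by
            apply div_le_div₀ (by linarith) (by linarith) hd1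
            rw [hsx]
            have h1 : Real.sqrt (m - 1) ≤ Real.sqrt (m - x) :=
              Real.sqrt_le_sqrt (by linarith)
            nlinarith [Real.sqrt_nonneg x, Real.sqrt_nonneg (1 - x),
              Real.sqrt_nonneg (m - x),
              mul_nonneg (Real.sqrt_nonneg x) (Real.sqrt_nonneg (1 - x)),
              mul_nonneg (mul_nonneg (Real.sqrt_nonneg x) (Real.sqrt_nonneg (1 - x)))
                (Real.sqrt_nonneg (m - x))]
        _ ≤ (1 - ξ₀) * Real.sqrt 2 / Real.sqrt (m - 1)
              * (x ^ (-(1/2) : ℝ) + (1 - x) ^ (-(1/2) : ℝ)) := by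
            rw [hrx, hr1x]
            have key2 := sqrt2bound' hx0 hx1''
            have hcc : (0:ℝ) ≤ (1 - ξ₀) / Real.sqrt (m - 1) :=
              div_nonneg (by linarith) (Real.sqrt_nonneg _)
            calc (1 - ξ₀) / (Real.sqrt (m - 1) * (Real.sqrt x * Real.sqrt (1 - x)))
                = (1 - ξ₀) / Real.sqrt (m - 1) * (Real.sqrt x * Real.sqrt (1 - x))⁻¹ := by
                  rw [div_mul_eq_div_div, div_eq_mul_inv ((1 - ξ₀) / Real.sqrt (m - 1))]
              _ ≤ (1 - ξ₀) / Real.sqrt (m - 1)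
                    * (Real.sqrt 2 * ((Real.sqrt x)⁻¹ + (Real.sqrt (1 - x))⁻¹)) :=
                  mul_le_mul_of_nonneg_left key2 hcc
              _ = (1 - ξ₀) * Real.sqrt 2 / Real.sqrt (m - 1)
                    * ((Real.sqrt x)⁻¹ + (Real.sqrt (1 - x))⁻¹) := by
                  rw [div_mul_eq_mul_div, div_mul_eq_mul_div, mul_assoc]
  · apply Integrable.const_mul
    have i1 : IntegrableOn (fun x : ℝ => x ^ (-(1/2) : ℝ)) (Set.Ioc 0 1) :=
      (intervalIntegrable_iff_integrableOn_Ioc_of_le zero_le_one).1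
        (intervalIntegrable_rpow' (by norm_num))
    have i2 : IntegrableOn (fun x : ℝ => (1 - x) ^ (-(1/2) : ℝ)) (Set.Ioc 0 1) := by
      have h := (intervalIntegrable_rpow' (a := 0) (b := 1)
        (by norm_num : (-1:ℝ) < -(1/2))).comp_sub_left 1
      simp only [sub_zero, sub_self] at h
      exact (intervalIntegrable_iff_integrableOn_Ioc_of_le zero_le_one).1 h.symm
    exact i1.add i2
  · exact ae_of_all _ fun x => lim_pt' ξ₀ _ x

lemma L3' (m ξ₀ : ℝ) (hm : 1 < m) (hξ₀ : ξ₀ < 0) :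
    Tendsto (fun η : ℝ => ∫ x in Set.Ioi m,
      (x - ξ₀) / (Real.sqrt (x * (x - 1) * (x - m)) * (x - η))) atBot (nhds 0) := by
  have hm0 : (0:ℝ) < m := by linarith
  set c₁ : ℝ := (Real.sqrt (m * (m - 1)))⁻¹ with hc₁
  set c₂ : ℝ := (Real.sqrt ((m - 1) / (m * (m + 1))))⁻¹ with hc₂
  have hmm1 : (0:ℝ) < m * (m - 1) := by nlinarith
  have hk : (0:ℝ) < (m - 1) / (m * (m + 1)) := by
    apply div_pos (by linarith) (by nlinarith)
  have hc₁0 : (0:ℝ) < c₁ := by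
    rw [hc₁]; exact inv_pos.2 (Real.sqrt_pos.2 hmm1)
  have hc₂0 : (0:ℝ) < c₂ := by
    rw [hc₂]; exact inv_pos.2 (Real.sqrt_pos.2 hk)
  have := MeasureTheory.tendsto_integral_filter_of_dominated_convergence
    (μ := volume.restrict (Set.Ioi m)) (l := atBot)
    (F := fun η x => (x - ξ₀) / (Real.sqrt (x * (x - 1) * (x - m)) * (x - η)))
    (f := fun _ => (0:ℝ))
    (fun x => if x ≤ m + 1 then c₁ * (x - m) ^ (-(1/2) : ℝ) else c₂ * x ^ (-(3/2) : ℝ))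
    ?_ ?_ ?_ ?_
  · simpa using this
  · refine Eventually.of_forall fun η => (Measurable.aestronglyMeasurable ?_)
    fun_prop
  · filter_upwards [eventually_le_atBot (ξ₀ - 1 : ℝ)] with η hη
    rw [ae_restrict_iff' measurableSet_Ioi]
    refine ae_of_all _ fun x hx => ?_
    have hxm : m < x := hx
    have hx0 : (0:ℝ) < x := by linarith
    have hx1 : (1:ℝ) < x := by linarith
    have hxm0 : (0:ℝ) < x - m := by linarith
    have hprod0 : (0:ℝ) < x * (x - 1) * (x - m) := mul_pos (mul_pos hx0 (by linarith)) hxm0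
    have hs : (0:ℝ) < Real.sqrt (x * (x - 1) * (x - m)) := Real.sqrt_pos.2 hprod0
    have hxη : x - ξ₀ + 1 ≤ x - η := by linarith
    have hxξ : (0:ℝ) < x - ξ₀ := by linarith
    rw [Real.norm_eq_abs, _root_.abs_of_nonneg (div_nonneg hxξ.le
      (mul_nonneg hs.le (by linarith)))]
    have step1 : (x - ξ₀) / (Real.sqrt (x * (x - 1) * (x - m)) * (x - η))
        ≤ (Real.sqrt (x * (x - 1) * (x - m)))⁻¹ := by
      rw [div_le_iff₀ (mul_pos hs (by linarith : (0:ℝ) < x - η))]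
      rw [← mul_assoc, inv_mul_cancel₀ hs.ne', one_mul]
      linarith
    refine le_trans step1 ?_
    by_cases hxm1 : x ≤ m + 1
    · rw [if_pos hxm1]
      have hr : (x - m) ^ (-(1/2) : ℝ) = (Real.sqrt (x - m))⁻¹ := by
        rw [Real.rpow_neg hxm0.le, ← Real.sqrt_eq_rpow]
      rw [hr, hc₁, ← mul_inv]
      apply inv_anti₀
      · exact mul_pos (Real.sqrt_pos.2 hmm1) (Real.sqrt_pos.2 hxm0)
      · rw [show x * (x - 1) * (x - m) = (x * (x - 1)) * (x - m) from by ring,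
          Real.sqrt_mul (mul_nonneg hx0.le (by linarith) : (0:ℝ) ≤ x * (x - 1))]
        exact mul_le_mul_of_nonneg_right
          (Real.sqrt_le_sqrt (by nlinarith)) (Real.sqrt_nonneg _)
    · push_neg at hxm1
      rw [if_neg (not_le.2 hxm1)]
      have hx32 : Real.sqrt (x ^ (3:ℕ)) = x ^ ((3:ℝ)/2) := by
        rw [Real.sqrt_eq_rpow, ← Real.rpow_natCast x 3, ← Real.rpow_mul hx0.le]
        norm_num
      have hr : x ^ (-(3/2) : ℝ) = (x ^ ((3:ℝ)/2))⁻¹ := by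
        rw [show (-(3/2) : ℝ) = -((3:ℝ)/2) from by norm_num, Real.rpow_neg hx0.le]
      rw [hr, hc₂, ← mul_inv]
      apply inv_anti₀
      · positivity
      · rw [← hx32, ← Real.sqrt_mul hk.le]
        apply Real.sqrt_le_sqrt
        have h1 : ((m - 1) / m) * x ≤ x - 1 := by
          rw [div_mul_eq_mul_div, div_le_iff₀ hm0]
          nlinarith
        have h2 : x / (m + 1) ≤ x - m := by
          rw [div_le_iff₀ (by linarith : (0:ℝ) < m + 1)]
          nlinarith
        calc (m - 1) / (m * (m + 1)) * x ^ (3:ℕ)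
            = x * (((m - 1) / m) * x) * (x / (m + 1)) := by
              field_simp
          _ ≤ x * (x - 1) * (x - m) := by
              apply mul_le_mul (mul_le_mul_of_nonneg_left h1 hx0.le) h2
                (div_nonneg hx0.le (by linarith)) (mul_nonneg hx0.le (by linarith))
  · have hsplit : Set.Ioc m (m + 1) ∪ Set.Ioi (m + 1) = Set.Ioi m :=
      Set.Ioc_union_Ioi_eq_Ioi (by linarith)
    rw [← hsplit]
    apply IntegrableOn.union
    · apply IntegrableOn.congr_fun (f := fun x : ℝ => c₁ * (x - m) ^ (-(1/2) : ℝ))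
      · apply Integrable.const_mul
        have h := (intervalIntegrable_rpow' (a := 0) (b := 1)
          (by norm_num : (-1:ℝ) < -(1/2))).comp_sub_right m
        rw [zero_add, add_comm 1 m] at h
        exact (intervalIntegrable_iff_integrableOn_Ioc_of_le (by linarith)).1 h
      · intro x hx
        exact (if_pos hx.2).symm
      · exact measurableSet_Ioc
    · apply IntegrableOn.congr_fun (f := fun x : ℝ => c₂ * x ^ (-(3/2) : ℝ))
      · exact (integrableOn_Ioi_rpow_of_lt (by norm_num) (by linarith)).const_mul c₂
      · intro x hx
        exact (if_neg (not_le.2 hx)).symm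
      · exact measurableSet_Ioi
  · exact ae_of_all _ fun x => lim_pt' ξ₀ _ x

lemma J1eq' (m ξ₀ η : ℝ) :
    (∫ x in (0:ℝ)..1,
        ((x : ℂ) - (ξ₀ : ℂ)) / ((Real.sqrt (x * (1 - x) * (m - x)) : ℂ) * ((x : ℂ) - (η : ℂ))))
      = ((∫ x in (0:ℝ)..1,
          (x - ξ₀) / (Real.sqrt (x * (1 - x) * (m - x)) * (x - η)) : ℝ) : ℂ) := by
  simp only [← Complex.ofReal_sub, ← Complex.ofReal_mul, ← Complex.ofReal_div,
    intervalIntegral.integral_ofReal]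

lemma J2eq' (m ξ₀ η : ℝ) :
    (∫ x in Set.Ioi m,
        ((x : ℂ) - (ξ₀ : ℂ)) / ((Real.sqrt (x * (x - 1) * (x - m)) : ℂ) * ((x : ℂ) - (η : ℂ))))
      = ((∫ x in Set.Ioi m,
          (x - ξ₀) / (Real.sqrt (x * (x - 1) * (x - m)) * (x - η)) : ℝ) : ℂ) := by
  simp only [← Complex.ofReal_sub, ← Complex.ofReal_mul, ← Complex.ofReal_div]
  exact _root_.integral_ofReal

end Aux

theorem stmt10 (m ξ₀ N₀ N₁ N₂ b₀ b₁ : ℝ) (hm : 1 < m) (hξ₀ : ξ₀ < 0) :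
    Tendsto (fun η : ℝ => Phi1R m ξ₀ N₀ N₁ N₂ b₀ b₁ η / ((Real.sqrt (-η) : ℝ) : ℂ))
      atBot (nhds (-(2 * I * (N₁ : ℂ)))) := by
  have key : (fun η : ℝ => Phi1R m ξ₀ N₀ N₁ N₂ b₀ b₁ η / ((Real.sqrt (-η) : ℝ) : ℂ))
      = fun η : ℝ =>
        (N₀ : ℂ) * (((Real.sqrt (-η))⁻¹ : ℝ) : ℂ)
        + I * ((N₁ : ℂ) + I * (N₂ : ℂ))
            * (((uNeg m η / ((η - ξ₀) * Real.sqrt (-η)) : ℝ) : ℂ)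
              + ((uNeg m ξ₀ / ((η - ξ₀) * Real.sqrt (-η)) : ℝ) : ℂ))
        + I * ((N₁ : ℂ) - I * (N₂ : ℂ))
            * (((uNeg m η / ((η - ξ₀) * Real.sqrt (-η)) : ℝ) : ℂ)
              - ((uNeg m ξ₀ / ((η - ξ₀) * Real.sqrt (-η)) : ℝ) : ℂ))
        + I / (Real.pi : ℂ) * ((uNeg m η / ((η - ξ₀) * Real.sqrt (-η)) : ℝ) : ℂ)
            * ((b₁ : ℂ) * ((∫ x in (0:ℝ)..1,
                  (x - ξ₀) / (Real.sqrt (x * (1 - x) * (m - x)) * (x - η)) : ℝ) : ℂ)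
              - (b₀ : ℂ) * ((∫ x in Set.Ioi m,
                  (x - ξ₀) / (Real.sqrt (x * (x - 1) * (x - m)) * (x - η)) : ℝ) : ℂ)) := by
    funext η
    rw [Phi1R, J1eq' m ξ₀ η, J2eq' m ξ₀ η]
    push_cast
    simp only [div_eq_mul_inv, mul_inv]
    ring
  rw [key]
  have cast_tendsto : ∀ (f : ℝ → ℝ) (c : ℝ), Tendsto f atBot (nhds c) →
      Tendsto (fun η : ℝ => ((f η : ℝ) : ℂ)) atBot (nhds (c : ℂ)) := fun f c h =>
    (Complex.continuous_ofReal.tendsto c).comp h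
  have hr1C : Tendsto (fun η : ℝ => ((uNeg m η / ((η - ξ₀) * Real.sqrt (-η)) : ℝ) : ℂ))
      atBot (nhds (-1 : ℂ)) := by
    simpa using cast_tendsto _ _ (hr1' m ξ₀ hm hξ₀)
  have hr2C : Tendsto (fun η : ℝ => ((uNeg m ξ₀ / ((η - ξ₀) * Real.sqrt (-η)) : ℝ) : ℂ))
      atBot (nhds (0 : ℂ)) := by
    simpa using cast_tendsto _ _ (hr2' m ξ₀)
  have he0C : Tendsto (fun η : ℝ => (((Real.sqrt (-η))⁻¹ : ℝ) : ℂ)) atBot (nhds (0 : ℂ)) := by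
    simpa using cast_tendsto _ _ he0'
  have hJ1C : Tendsto (fun η : ℝ => ((∫ x in (0:ℝ)..1,
      (x - ξ₀) / (Real.sqrt (x * (1 - x) * (m - x)) * (x - η)) : ℝ) : ℂ))
      atBot (nhds (0 : ℂ)) := by
    simpa using cast_tendsto _ _ (L2' m ξ₀ hm hξ₀)
  have hJ2C : Tendsto (fun η : ℝ => ((∫ x in Set.Ioi m,
      (x - ξ₀) / (Real.sqrt (x * (x - 1) * (x - m)) * (x - η)) : ℝ) : ℂ))
      atBot (nhds (0 : ℂ)) := by
    simpa using cast_tendsto _ _ (L3' m ξ₀ hm hξ₀)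
  have HT := (((he0C.const_mul (N₀ : ℂ)).add
      ((hr1C.add hr2C).const_mul (I * ((N₁ : ℂ) + I * (N₂ : ℂ))))).add
      ((hr1C.sub hr2C).const_mul (I * ((N₁ : ℂ) - I * (N₂ : ℂ))))).add
      ((hr1C.const_mul (I / (Real.pi : ℂ))).mul
        ((hJ1C.const_mul (b₁ : ℂ)).sub (hJ2C.const_mul (b₀ : ℂ))))
  convert HT using 2
  ring
end

section
/- Let μ₀ > 0 and b₀ be real and let τ ∈ ℂ with τ ≠ 0. For complex F and W define Φ₁⁺ = F, Φ₁⁻ = conj(F), Φ₂⁺ = i·conj(τ)·W/μ₀, Φ₂⁻ = −i·τ·conj(W)/μ₀. Then the pair of conditions Im W = 0 and Im F = b₀ − Im(conj(τ)·W/μ₀) holds if and only if the pair of conditions Φ₁⁺ = Φ₁⁻ + i(1 − conj(τ)/τ)·Φ₂⁻ + 2i·b₀ and Φ₂⁺ = −(conj(τ)/τ)·Φ₂⁻ holds. -/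
open Complex ComplexConjugate

theorem stmt15 (μ₀ b₀ : ℝ) (hμ : 0 < μ₀) (τ F W : ℂ) (hτ : τ ≠ 0) :
    (W.im = 0 ∧ F.im = b₀ - (conj τ * W / (μ₀ : ℂ)).im) ↔
    (F = conj F + I * (1 - conj τ / τ) * (-(I) * τ * conj W / (μ₀ : ℂ)) + 2 * I * (b₀ : ℂ) ∧
      I * conj τ * W / (μ₀ : ℂ) = -(conj τ / τ) * (-(I) * τ * conj W / (μ₀ : ℂ))) := by
  have hμ' : (μ₀ : ℂ) ≠ 0 := by exact_mod_cast hμ.ne'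
  have hτ' : conj τ ≠ 0 := by simpa using hτ
  have e2 : (I * conj τ * W / (μ₀ : ℂ) = -(conj τ / τ) * (-(I) * τ * conj W / (μ₀ : ℂ)))
      ↔ W.im = 0 := by
    rw [← Complex.conj_eq_iff_im]
    constructor
    · intro h
      field_simp at h
      have h2 : (I * conj τ * τ * (μ₀:ℂ)) * W = (I * conj τ * τ * (μ₀:ℂ)) * conj W := by
        linear_combination (I * conj τ * τ * (μ₀:ℂ)) * h
      exact (mul_left_cancel₀ (by simp [hτ, hτ', hμ', I_ne_zero]) h2).symm
    · intro h
      rw [← h]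
      field_simp
      simp [h]
  have e1 : ∀ _ : conj W = W,
      (F = conj F + I * (1 - conj τ / τ) * (-(I) * τ * conj W / (μ₀ : ℂ)) + 2 * I * (b₀ : ℂ))
      ↔ F.im = b₀ - (conj τ * W / (μ₀ : ℂ)).im := by
    intro hW
    rw [hW]
    have key : I * (1 - conj τ / τ) * (-(I) * τ * W / (μ₀ : ℂ)) = (τ - conj τ) * W / (μ₀ : ℂ) := by
      field_simp
      linear_combination (conj τ * W - τ * W) * Complex.I_sq
    rw [key]
    have hWim : W.im = 0 := Complex.conj_eq_iff_im.1 hW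
    rw [Complex.ext_iff]
    simp [Complex.div_re, Complex.div_im, hWim]
    have hμr : μ₀ ≠ 0 := hμ.ne'
    field_simp
    constructor <;> intro h <;> linarith
  constructor
  · rintro ⟨h1, h2⟩
    have hW : conj W = W := Complex.conj_eq_iff_im.2 h1
    exact ⟨(e1 hW).2 h2, e2.2 h1⟩
  · rintro ⟨h1, h2⟩
    have him := e2.1 h2
    have hW : conj W = W := Complex.conj_eq_iff_im.2 him
    exact ⟨him, (e1 hW).1 h1⟩
end

section
/- Let n ≥ 1 be an integer, let m > 1 and k₁, …, k_{2n} be real numbers with k_j ≤ 1 for all j, let ξ₀, …, ξ_n be real numbers, let c ∈ ℂ, and let ζ ∈ ℂ with ζ ∉ [m,∞) and ζ ≠ ξ_j for all j = 0, …, n. Then, as the real variable ξ tends to +∞, ξ^{3/2} · (1/2)·[ 1 + (c/(i·√((ξ−m)·∏_{j=1}^{2n}(ξ−k_j))))·∏_{j=0}^{n} (ξ−ξ_j)/(ζ−ξ_j) ]·( 1/(ξ−ζ) − 1/(ξ−ξ₀) ) converges to c·(ζ−ξ₀)/(2i·∏_{j=0}^{n}(ζ−ξ_j)). -/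
open Complex Filter

lemma aux_inv_c : Tendsto (fun x : ℝ => ((x:ℂ))⁻¹) atTop (nhds 0) := by
  have h := (Complex.continuous_ofReal.tendsto 0).comp tendsto_inv_atTop_zero
  simpa [Function.comp_def] using h

lemma aux1r (a : ℝ) : Tendsto (fun x : ℝ => (x - a)/x) atTop (nhds 1) := by
  have h : Tendsto (fun x : ℝ => 1 - a * x⁻¹) atTop (nhds 1) := by
    simpa using tendsto_const_nhds.sub (tendsto_inv_atTop_zero.const_mul a)
  apply h.congr'
  filter_upwards [eventually_gt_atTop (0:ℝ)] with x hx
  field_simp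

lemma aux2r (a : ℝ) : Tendsto (fun x : ℝ => x/(x - a)) atTop (nhds 1) := by
  have h := (aux1r a).inv₀ one_ne_zero
  simpa [inv_div] using h

lemma aux2c (a : ℂ) : Tendsto (fun x : ℝ => (x:ℂ)/((x:ℂ) - a)) atTop (nhds 1) := by
  have h1 : Tendsto (fun x : ℝ => ((x:ℂ) - a)/(x:ℂ)) atTop (nhds 1) := by
    have h : Tendsto (fun x : ℝ => 1 - a * ((x:ℂ))⁻¹) atTop (nhds 1) := by
      simpa using tendsto_const_nhds.sub (aux_inv_c.const_mul a)
    apply h.congr'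
    filter_upwards [eventually_gt_atTop (0:ℝ)] with x hx
    have hx0 : (x:ℂ) ≠ 0 := Complex.ofReal_ne_zero.2 (ne_of_gt hx)
    field_simp
  have h := h1.inv₀ one_ne_zero
  simpa [inv_div] using h

lemma alg_aux (S Pc Q prodN X c Cq : ℂ) (hS : S ≠ 0) (hP : Pc ≠ 0) (hQ : Q ≠ 0) :
    1/2 * S⁻¹ * (X^2 * Cq) + (c/(2*Complex.I) * Q⁻¹ * (prodN/(S*Pc))) * (X^2 * Cq)
      = (S⁻¹ * X^2) * (1/2 * (1 + c/(Complex.I*Pc) * (prodN/Q)) * Cq) := by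
  ring

set_option maxHeartbeats 1000000 in
theorem stmt18 (n : ℕ) (hn : 1 ≤ n) (m : ℝ) (hm : 1 < m)
    (k : Fin (2 * n) → ℝ) (hk : ∀ j, k j ≤ 1)
    (ξs : Fin (n + 1) → ℝ) (c ζ : ℂ)
    (hζ : ∀ x : ℝ, m ≤ x → ζ ≠ (x : ℂ)) (hζξ : ∀ j, ζ ≠ ((ξs j : ℝ) : ℂ)) :
    Tendsto (fun x : ℝ =>
        ((x ^ ((3:ℝ)/2) : ℝ) : ℂ) *
          ((1 / 2) * (1 + (c / (I * (Real.sqrt ((x - m) * ∏ j, (x - k j)) : ℂ)))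
                * ∏ j, (((x : ℂ) - (ξs j : ℂ)) / (ζ - (ξs j : ℂ))))
            * (1 / ((x : ℂ) - ζ) - 1 / ((x : ℂ) - (ξs 0 : ℂ)))))
      atTop (nhds (c * (ζ - (ξs 0 : ℂ)) / (2 * I * ∏ j, (ζ - (ξs j : ℂ))))) := by
  set P : ℝ → ℝ := fun x => (x - m) * ∏ j, (x - k j) with hPdef
  set N : ℝ → ℝ := fun x => ∏ j, (x - ξs j) with hNdef
  set r : ℝ → ℝ := fun x => N x / (Real.sqrt x * Real.sqrt (P x)) with hrdef
  set Cx : ℝ → ℂ := fun x => 1/((x:ℂ) - ζ) - 1/((x:ℂ) - (ξs 0 : ℂ)) with hCdef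
  set Q : ℂ := ∏ j, (ζ - (ξs j : ℂ)) with hQdef
  have hQ : Q ≠ 0 := Finset.prod_ne_zero_iff.2 fun j _ => sub_ne_zero.2 (hζξ j)
  -- limit of x^2 * Cx
  have hB : Tendsto (fun x : ℝ => (x:ℂ)^2 * Cx x) atTop (nhds (ζ - (ξs 0 : ℂ))) := by
    have h := (((aux2c ζ).const_mul (ζ - (ξs 0 : ℂ))).mul (aux2c ((ξs 0 : ℝ) : ℂ)))
    have h' : Tendsto (fun x : ℝ =>
        ((ζ - (ξs 0 : ℂ)) * ((x:ℂ)/((x:ℂ) - ζ))) * ((x:ℂ)/((x:ℂ) - (ξs 0 : ℂ))))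
        atTop (nhds (ζ - (ξs 0 : ℂ))) := by simpa using h
    apply h'.congr'
    filter_upwards [eventually_gt_atTop m, eventually_gt_atTop (ξs 0)] with x hxm hxξ
    have hXζ : (x:ℂ) - ζ ≠ 0 := sub_ne_zero.2 (hζ x hxm.le).symm
    have hXξ : (x:ℂ) - (ξs 0 : ℂ) ≠ 0 := by
      refine sub_ne_zero.2 ?_
      exact_mod_cast hxξ.ne'
    simp only [hCdef]
    field_simp
    ring
  -- limit of r
  have hr2 : Tendsto (fun x : ℝ => (r x)^2) atTop (nhds 1) := by
    have hp1 : Tendsto (fun x : ℝ => ∏ j, ((x - ξs j)/x)) atTop (nhds 1) := by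
      have := tendsto_finset_prod (f := fun (j : Fin (n+1)) (x : ℝ) => (x - ξs j)/x)
        (a := fun _ => 1) Finset.univ (fun j _ => aux1r (ξs j))
      simpa using this
    have hp2 : Tendsto (fun x : ℝ => ∏ j, (x/(x - k j))) atTop (nhds 1) := by
      have := tendsto_finset_prod (f := fun (j : Fin (2*n)) (x : ℝ) => x/(x - k j))
        (a := fun _ => 1) Finset.univ (fun j _ => aux2r (k j))
      simpa using this
    have h := ((hp1.pow 2).mul ((aux2r m).mul hp2))
    have h' : Tendsto (fun x : ℝ =>
        (∏ j, ((x - ξs j)/x))^2 * ((x/(x - m)) * ∏ j, (x/(x - k j))))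
        atTop (nhds 1) := by simpa using h
    apply h'.congr'
    filter_upwards [eventually_gt_atTop (0:ℝ), eventually_gt_atTop m,
      eventually_all.2 fun j => eventually_gt_atTop (k j)] with x hx0 hxm hkx
    have hP : 0 < P x := mul_pos (sub_pos.2 hxm) (Finset.prod_pos fun j _ => sub_pos.2 (hkx j))
    have hD : (∏ j, (x - k j)) ≠ 0 := (Finset.prod_pos fun j _ => sub_pos.2 (hkx j)).ne'
    have hsq : (Real.sqrt x * Real.sqrt (P x))^2 = x * P x := by
      rw [mul_pow, Real.sq_sqrt hx0.le, Real.sq_sqrt hP.le]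
    simp only [hrdef, div_pow, hsq, hNdef, hPdef]
    simp only [Finset.prod_div_distrib, Finset.prod_const, Finset.card_univ,
      Fintype.card_fin]
    have hP' : 0 ≤ (x - m) * ∏ j, (x - k j) := hP.le
    simp only [mul_pow, Real.sq_sqrt hx0.le, Real.sq_sqrt hP']
    field_simp
    ring
  have hrpos : ∀ᶠ x in atTop, 0 ≤ r x := by
    filter_upwards [eventually_gt_atTop (0:ℝ),
      eventually_all.2 fun j => eventually_gt_atTop (ξs j)] with x hx0 hξx
    have hN : 0 < N x := Finset.prod_pos fun j _ => sub_pos.2 (hξx j)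
    exact div_nonneg hN.le (mul_nonneg (Real.sqrt_nonneg _) (Real.sqrt_nonneg _))
  have hrlim : Tendsto r atTop (nhds 1) := by
    have hs := (Real.continuous_sqrt.tendsto 1).comp hr2
    have hs' : Tendsto (fun x => Real.sqrt ((r x)^2)) atTop (nhds 1) := by
      simpa [Function.comp_def] using hs
    apply hs'.congr'
    filter_upwards [hrpos] with x hx
    exact Real.sqrt_sq hx
  have hrc : Tendsto (fun x : ℝ => ((r x : ℝ):ℂ)) atTop (nhds 1) := by
    have := (Complex.continuous_ofReal.tendsto 1).comp hrlim
    simpa [Function.comp_def] using this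
  have hA : Tendsto (fun x : ℝ => ((x ^ (-(1:ℝ)/2) : ℝ):ℂ)) atTop (nhds 0) := by
    have h0 : Tendsto (fun x : ℝ => x ^ (-(1:ℝ)/2)) atTop (nhds 0) := by
      have := tendsto_rpow_neg_atTop (y := 1/2) (by norm_num)
      simpa [neg_div] using this
    have := (Complex.continuous_ofReal.tendsto 0).comp h0
    simpa [Function.comp_def] using this
  -- the comparison function
  have hG : Tendsto (fun x : ℝ =>
      (1/2 * ((x ^ (-(1:ℝ)/2) : ℝ):ℂ)) * ((x:ℂ)^2 * Cx x)
        + ((c/(2*I) * Q⁻¹) * ((r x : ℝ):ℂ)) * ((x:ℂ)^2 * Cx x)) atTop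
      (nhds (c * (ζ - (ξs 0 : ℂ)) / (2 * I * Q))) := by
    have h := ((hA.const_mul ((1:ℂ)/2)).mul hB).add
      ((hrc.const_mul (c/(2*I) * Q⁻¹)).mul hB)
    have hval : ((1:ℂ)/2 * 0) * (ζ - (ξs 0 : ℂ)) + ((c/(2*I) * Q⁻¹) * 1) * (ζ - (ξs 0 : ℂ))
        = c * (ζ - (ξs 0 : ℂ)) / (2 * I * Q) := by
      field_simp
      ring
    rw [← hval]
    exact h
  apply hG.congr'
  filter_upwards [eventually_gt_atTop m, eventually_gt_atTop (0:ℝ),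
    eventually_gt_atTop (ξs 0),
    eventually_all.2 fun j => eventually_gt_atTop (k j)] with x hxm hx0 hxξ hkx
  have hP : 0 < P x := mul_pos (sub_pos.2 hxm) (Finset.prod_pos fun j _ => sub_pos.2 (hkx j))
  have hXζ : (x:ℂ) - ζ ≠ 0 := sub_ne_zero.2 (hζ x hxm.le).symm
  have hXξ : (x:ℂ) - (ξs 0 : ℂ) ≠ 0 := by
    refine sub_ne_zero.2 ?_
    exact_mod_cast hxξ.ne'
  have hSc : ((Real.sqrt x : ℝ):ℂ) ≠ 0 := Complex.ofReal_ne_zero.2 (Real.sqrt_pos.2 hx0).ne'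
  have hPc : ((Real.sqrt (P x) : ℝ):ℂ) ≠ 0 := Complex.ofReal_ne_zero.2 (Real.sqrt_pos.2 hP).ne'
  have h32 : (x:ℝ) ^ ((3:ℝ)/2) = x ^ (-(1:ℝ)/2) * x^2 := by
    rw [← Real.rpow_natCast x 2, ← Real.rpow_add hx0]
    norm_num
  have hhalf : x ^ (-(1:ℝ)/2) = (Real.sqrt x)⁻¹ := by
    rw [Real.sqrt_eq_rpow, ← Real.rpow_neg hx0.le]
    norm_num
  have hrc' : ((r x : ℝ):ℂ) = (∏ j, ((x:ℂ) - (ξs j : ℂ))) /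
      (((Real.sqrt x : ℝ):ℂ) * ((Real.sqrt (P x) : ℝ):ℂ)) := by
    simp only [hrdef, hNdef]
    push_cast
    ring
  have h32c : ((x ^ ((3:ℝ)/2) : ℝ):ℂ) = ((Real.sqrt x : ℝ):ℂ)⁻¹ * (x:ℂ)^2 := by
    rw [h32, hhalf]
    push_cast
    ring
  have hAc : ((x ^ (-(1:ℝ)/2) : ℝ):ℂ) = ((Real.sqrt x : ℝ):ℂ)⁻¹ := by
    rw [hhalf]; push_cast; ring
  rw [hrc', hAc, Finset.prod_div_distrib, ← hQdef, h32c]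
  exact alg_aux _ _ _ _ _ _ _ hSc hPc hQ
end
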